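/- arXiv:2012.11947 — 3 statements merged into one kernel-verified Lean document; each statement's English description precedes it below -/
import Mathlib

section
/- For every m ∈ ℝ and λ₀ > 0, the function f : (0,∞) → ℝ defined by f(Λ) = −1/4 − m² − m·tanh(m·log(Λ/λ₀)) satisfies the renormalization group differential equation Λ · f'(Λ) = (f(Λ) + 1/4 + m²)² − m² for all Λ > 0. -/
lemma hasDerivAt_tanh' (x : ℝ) :
    HasDerivAt Real.tanh (1 - Real.tanh x ^ 2) x := by
  have h := (Real.hasDerivAt_sinh x).div (Real.hasDerivAt_cosh x) (Real.cosh_pos x).ne'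
  have key : (Real.cosh x * Real.cosh x - Real.sinh x * Real.sinh x) / Real.cosh x ^ 2
      = 1 - (Real.sinh x / Real.cosh x) ^ 2 := by
    rw [div_pow, one_sub_div (by positivity)]
    congr 1
    nlinarith [Real.cosh_sq_sub_sinh_sq x]
  have heq : Real.tanh = fun y => Real.sinh y / Real.cosh y := by
    funext y; exact Real.tanh_eq_sinh_div_cosh y
  rw [heq]
  rw [key] at h
  exact h

/-- The running coupling `f(Λ) = -1/4 - m² - m tanh(m log(Λ/λ₀))` solves the
renormalization group flow equation `Λ f'(Λ) = (f(Λ) + 1/4 + m²)² - m²`. -/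
theorem dirichlet_running_coupling_flow (m lam0 : ℝ) (hlam0 : 0 < lam0) :
    ∀ Λ > (0:ℝ),
      Λ * deriv (fun L : ℝ => -1/4 - m^2 - m * Real.tanh (m * Real.log (L / lam0))) Λ
        = ((-1/4 - m^2 - m * Real.tanh (m * Real.log (Λ / lam0))) + 1/4 + m^2)^2 - m^2 := by
  intro Λ hΛ
  have hlog : HasDerivAt (fun L : ℝ => m * Real.log (L / lam0)) (m / Λ) Λ := by
    have h1 : HasDerivAt (fun L : ℝ => Real.log (L / lam0)) (1 / Λ) Λ := by
      have h2 := (Real.hasDerivAt_log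
        (by positivity : (Λ / lam0 : ℝ) ≠ 0)).comp Λ ((hasDerivAt_id Λ).div_const lam0)
      rw [show (1 / Λ) = (Λ / lam0)⁻¹ * (1 / lam0) by field_simp]
      exact h2
    simpa [mul_one_div, div_eq_mul_inv] using h1.const_mul m
  have htanh := (hasDerivAt_tanh' (m * Real.log (Λ / lam0))).comp Λ hlog
  set t := Real.tanh (m * Real.log (Λ / lam0)) with ht
  have hf : HasDerivAt (fun L : ℝ => -1/4 - m^2 - m * Real.tanh (m * Real.log (L / lam0)))
      (-(m * ((1 - t ^ 2) * (m / Λ)))) Λ := by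
    simpa using (htanh.const_mul m).const_sub (-1/4 - m^2)
  rw [hf.deriv]
  field_simp
  ring
end

section
/- Let m_I > 0, Λ₀ > 0, θ₀ ∈ ℝ, and define f(Λ) = m_I·tan(θ₀ + m_I·log(Λ/Λ₀)) + m_I² − 1/4 on the open set of Λ > 0 for which θ₀ + m_I·log(Λ/Λ₀) is not of the form π/2 + πk (k ∈ ℤ). Then: (1) Λ · f'(Λ) = (f(Λ) + 1/4 − m_I²)² + m_I² at every such Λ (this is the flow equation Λ df/dΛ = (f + 1/4 + α)² − α with α = −m_I² < 0); and (2) the discrete scaling symmetry f(e^{π/m_I}·Λ) = f(Λ) holds whenever both sides are defined. -/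
open Real

lemma cos_ne_zero_of_cond (θ : ℝ) (h : ∀ k : ℤ, θ ≠ Real.pi/2 + Real.pi * k) :
    Real.cos θ ≠ 0 := by
  intro hc
  rcases Real.cos_eq_zero_iff.1 hc with ⟨k, hk⟩
  exact h k (by rw [hk]; ring)

/-- For negative coupling `α = -m_I² < 0` the running coupling
`f(Λ) = m_I tan(θ₀ + m_I log(Λ/Λ₀)) + m_I² - 1/4` satisfies the flow equation
`Λ f'(Λ) = (f(Λ) + 1/4 - m_I²)² + m_I²` wherever it is defined, and exhibits the
discrete scaling symmetry `f(e^{π/m_I} Λ) = f(Λ)` (a limit cycle of log-period `π/m_I`). -/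
theorem limit_cycle_flow (mI Λ₀ θ₀ : ℝ) (hmI : 0 < mI) (hΛ₀ : 0 < Λ₀) :
    let f : ℝ → ℝ := fun Λ => mI * Real.tan (θ₀ + mI * Real.log (Λ / Λ₀)) + mI^2 - 1/4
    (∀ Λ > (0:ℝ), (∀ k : ℤ, θ₀ + mI * Real.log (Λ / Λ₀) ≠ Real.pi/2 + Real.pi * k) →
        Λ * deriv f Λ = (f Λ + 1/4 - mI^2)^2 + mI^2) ∧
    (∀ Λ > (0:ℝ), (∀ k : ℤ, θ₀ + mI * Real.log (Λ / Λ₀) ≠ Real.pi/2 + Real.pi * k) →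
        f (Real.exp (Real.pi / mI) * Λ) = f Λ) := by
  intro f
  constructor
  · intro Λ hΛ hk
    set θ := θ₀ + mI * Real.log (Λ / Λ₀) with hθ
    have hcos : Real.cos θ ≠ 0 := cos_ne_zero_of_cond θ hk
    have hlog : HasDerivAt (fun x : ℝ => θ₀ + mI * Real.log (x / Λ₀)) (mI / Λ) Λ := by
      have h1 : HasDerivAt (fun x : ℝ => Real.log (x / Λ₀))
          ((1 / Λ₀) / (Λ / Λ₀)) Λ := by
        exact (Real.hasDerivAt_log (by positivity)).comp Λ
          ((hasDerivAt_id Λ).div_const Λ₀) |>.congr_deriv (by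
            simp only [id]; field_simp [hΛ.ne'])
      have h2 := (h1.const_mul mI).const_add θ₀
      convert h2 using 1
      · rfl
      · rfl
      field_simp
    have htan : HasDerivAt Real.tan (1 / Real.cos θ ^ 2) θ := Real.hasDerivAt_tan hcos
    have hf : HasDerivAt f (mI * (1 / Real.cos θ ^ 2 * (mI / Λ))) Λ :=
      (((htan.comp Λ hlog).const_mul mI).add_const (mI^2)).sub_const (1/4)
    rw [hf.deriv]
    have hsimp : f Λ + 1/4 - mI^2 = mI * Real.tan θ := by simp only [f]; ring
    rw [hsimp]
    have h1 : 1 / Real.cos θ ^ 2 = Real.tan θ ^ 2 + 1 := by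
      rw [Real.tan_eq_sin_div_cos]
      field_simp
      exact (Real.sin_sq_add_cos_sq θ).symm
    rw [h1]
    field_simp
  · intro Λ hΛ hk
    have hΛne : Λ ≠ 0 := ne_of_gt hΛ
    have hlog : Real.log (Real.exp (Real.pi / mI) * Λ / Λ₀)
        = Real.pi / mI + Real.log (Λ / Λ₀) := by
      rw [mul_div_assoc, Real.log_mul (Real.exp_ne_zero _) (by positivity), Real.log_exp]
    simp only [f, hlog]
    have : θ₀ + mI * (Real.pi / mI + Real.log (Λ / Λ₀))
        = (θ₀ + mI * Real.log (Λ / Λ₀)) + Real.pi := by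
      field_simp; ring
    rw [this, Real.tan_add_pi]
end

section
/- Let α ∈ ℝ and let ψ ∈ L^{2,∞}(ℝ₊) satisfy ∫₀^∞ ψ(p) dp = 0. Define (L̃_N ψ)(p) := p² ψ(p) − (α − 1/4) ∫₀^∞ max(p,q) ψ(q) dq (the inner integral converges absolutely). Then for every x > 0: −(𝓕_N ψ)''(x) + (α − 1/4) x⁻² (𝓕_N ψ)(x) = √(2/π) ∫₀^∞ cos(px) (L̃_N ψ)(p) dp, the last integral converging absolutely; i.e., the cosine transform intertwines the momentum-space Neumann Bessel operator with the Bessel differential expression L_α. -/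
open MeasureTheory
open Set

/-- `ψ ∈ L^{2,∞}(ℝ₊)`: measurable with `∫₀^∞ pⁿ |ψ(p)|² dp < ∞` for all `n`. -/
def MemL2Inf (ψ : ℝ → ℂ) : Prop :=
  AEStronglyMeasurable ψ (volume.restrict (Set.Ioi 0)) ∧
  ∀ n : ℕ, IntegrableOn (fun p : ℝ => p ^ n * ‖ψ p‖^2) (Set.Ioi 0)

/-- The cosine transform `(𝓕_N ψ)(x) = √(2/π) ∫₀^∞ cos(px) ψ(p) dp`. -/
noncomputable def cosineTransform (ψ : ℝ → ℂ) : ℝ → ℂ :=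
  fun x => (Real.sqrt (2 / Real.pi) : ℂ) * ∫ p in Set.Ioi (0:ℝ), (Real.cos (p * x) : ℂ) * ψ p

/-- The momentum-space Neumann Bessel operator
`(L̃_N ψ)(p) = p² ψ(p) - (α - 1/4) ∫₀^∞ max(p,q) ψ(q) dq`. -/
noncomputable def momentumBesselN (α : ℝ) (ψ : ℝ → ℂ) : ℝ → ℂ :=
  fun p => (p : ℂ)^2 * ψ p
    - ((α : ℂ) - 1/4) * ∫ q in Set.Ioi (0:ℝ), ((max p q : ℝ) : ℂ) * ψ q

lemma memL2Inf_moment {ψ : ℝ → ℂ} (hψ : MemL2Inf ψ) (n : ℕ) :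
    IntegrableOn (fun p : ℝ => p ^ n * ‖ψ p‖) (Set.Ioi 0) := by
  have hmeas : AEStronglyMeasurable (fun p : ℝ => p ^ n * ‖ψ p‖)
      (volume.restrict (Set.Ioi 0)) :=
    (continuous_pow n).aestronglyMeasurable.mul hψ.1.norm
  have hbint : IntegrableOn (fun p : ℝ =>
      (1/2) * (p ^ (2*n) * ‖ψ p‖^2 + p ^ (2*n+2) * ‖ψ p‖^2 + (1 + p^2)⁻¹)) (Set.Ioi 0) :=
    (((hψ.2 (2*n)).add (hψ.2 (2*n+2))).add
      (integrable_inv_one_add_sq.integrableOn)).const_mul _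
  refine hbint.mono' hmeas ?_
  filter_upwards [ae_restrict_mem measurableSet_Ioi] with p hp
  have hp0 : (0:ℝ) < p := hp
  have h1 : (0:ℝ) < 1 + p^2 := by positivity
  rw [Real.norm_eq_abs, abs_of_nonneg (by positivity)]
  set t : ℝ := p ^ n * ‖ψ p‖ with ht
  have ht0 : 0 ≤ t := by positivity
  have h2 : p ^ (2*n) * ‖ψ p‖^2 = t^2 := by rw [ht]; ring_nf
  have h3 : p ^ (2*n+2) * ‖ψ p‖^2 = p^2 * t^2 := by rw [ht]; ring_nf
  rw [h2, h3]
  rw [inv_eq_one_div]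
  rw [← sub_nonneg]
  have : 1 / 2 * (t ^ 2 + p ^ 2 * t ^ 2 + 1 / (1 + p ^ 2)) - t = ((1+p^2)*t - 1)^2 / (2*(1+p^2)) := by
    field_simp
    ring
  rw [this]
  positivity

lemma key_int {ψ : ℝ → ℂ} (hψ : MemL2Inf ψ) (n : ℕ) (g : ℝ → ℂ)
    (hg : AEStronglyMeasurable g (volume.restrict (Set.Ioi 0)))
    (hb : ∀ p ∈ Set.Ioi (0:ℝ), ‖g p‖ ≤ p ^ n) :
    IntegrableOn (fun p => g p * ψ p) (Set.Ioi 0) := by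
  refine (memL2Inf_moment hψ n).mono' (hg.mul hψ.1) ?_
  filter_upwards [ae_restrict_mem measurableSet_Ioi] with p hp
  rw [norm_mul]
  exact mul_le_mul_of_nonneg_right (hb p hp) (norm_nonneg _)

-- the FTC computation

lemma ftc_cos {x : ℝ} (hx : 0 < x) (q : ℝ) :
    ∫ p in (0:ℝ)..q, Real.cos (p * x) * (q - p) = (1 - Real.cos (q * x)) / x ^ 2 := by
  have hx0 : x ≠ 0 := ne_of_gt hx
  have hder : ∀ p ∈ Set.uIcc (0:ℝ) q, HasDerivAt
      (fun p : ℝ => (q - p) * Real.sin (p * x) / x - Real.cos (p * x) / x ^ 2)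
      (Real.cos (p * x) * (q - p)) p := by
    intro p _
    have h1 : HasDerivAt (fun p : ℝ => p * x) x p := hasDerivAt_mul_const x
    have h2 : HasDerivAt (fun p : ℝ => Real.sin (p * x)) (Real.cos (p * x) * x) p := h1.sin
    have h3 : HasDerivAt (fun p : ℝ => q - p) (-1) p := (hasDerivAt_id p).const_sub q
    have h4 := ((h3.mul h2).div_const x).sub ((h1.cos).div_const (x ^ 2))
    refine h4.congr_deriv ?_
    field_simp
    ring
  have hci : IntervalIntegrable (fun p : ℝ => Real.cos (p * x) * (q - p))
      volume 0 q :=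
    (((Real.continuous_cos.comp (continuous_mul_right x))).mul
      ((continuous_const.sub continuous_id))).intervalIntegrable 0 q
  rw [intervalIntegral.integral_eq_sub_of_hasDerivAt hder hci]
  simp [Real.sin_zero, Real.cos_zero]
  field_simp
  ring

lemma cos_deriv1 {ψ : ℝ → ℂ} (hψ : MemL2Inf ψ) (x : ℝ) :
    HasDerivAt (fun y : ℝ => ∫ p in Set.Ioi (0:ℝ), (Real.cos (p * y) : ℂ) * ψ p)
      (∫ p in Set.Ioi (0:ℝ), ((-Real.sin (p * x) * p : ℝ) : ℂ) * ψ p) x := by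
  have key := hasDerivAt_integral_of_dominated_loc_of_deriv_le
    (μ := volume.restrict (Set.Ioi 0))
    (F := fun y p => (Real.cos (p * y) : ℂ) * ψ p)
    (F' := fun y p => ((-Real.sin (p * y) * p : ℝ) : ℂ) * ψ p)
    (x₀ := x) (bound := fun p => p ^ 1 * ‖ψ p‖) Filter.univ_mem
    (Filter.Eventually.of_forall fun y =>
      ((Complex.continuous_ofReal.comp
        (Real.continuous_cos.comp (continuous_mul_right y))).aestronglyMeasurable.mul hψ.1))
    (by
      refine key_int hψ 0 _ ((Complex.continuous_ofReal.comp
        (Real.continuous_cos.comp (continuous_mul_right x))).aestronglyMeasurable) ?_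
      intro p hp
      simp only [pow_zero, Complex.norm_real, Real.norm_eq_abs, Function.comp]
      exact Real.abs_cos_le_one _)
    ((Complex.continuous_ofReal.comp (by continuity)).aestronglyMeasurable.mul hψ.1)
    (by
      filter_upwards [ae_restrict_mem measurableSet_Ioi] with p hp
      intro y _
      rw [norm_mul, Complex.norm_real, Real.norm_eq_abs, pow_one]
      refine mul_le_mul_of_nonneg_right ?_ (norm_nonneg _)
      rw [abs_mul]
      calc |(-Real.sin (p * y))| * |p| ≤ 1 * |p| := by
            refine mul_le_mul_of_nonneg_right ?_ (abs_nonneg _)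
            rw [abs_neg]; exact Real.abs_sin_le_one _
        _ = p := by rw [one_mul, abs_of_pos hp])
    (memL2Inf_moment hψ 1)
    (Filter.Eventually.of_forall fun p => by
      intro y _
      have h1 : HasDerivAt (fun y : ℝ => p * y) p y := by
        simpa using (hasDerivAt_id y).const_mul p
      have h2 := h1.cos
      have h3 := h2.ofReal_comp.mul_const (ψ p)
      convert h3 using 1)
  exact key.2

lemma cos_deriv2 {ψ : ℝ → ℂ} (hψ : MemL2Inf ψ) (x : ℝ) :
    HasDerivAt (fun y : ℝ => ∫ p in Set.Ioi (0:ℝ), ((-Real.sin (p * y) * p : ℝ) : ℂ) * ψ p)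
      (∫ p in Set.Ioi (0:ℝ), ((-(Real.cos (p * x) * p) * p : ℝ) : ℂ) * ψ p) x := by
  have key := hasDerivAt_integral_of_dominated_loc_of_deriv_le
    (μ := volume.restrict (Set.Ioi 0))
    (F := fun y p => ((-Real.sin (p * y) * p : ℝ) : ℂ) * ψ p)
    (F' := fun y p => ((-(Real.cos (p * y) * p) * p : ℝ) : ℂ) * ψ p)
    (x₀ := x) (bound := fun p => p ^ 2 * ‖ψ p‖) Filter.univ_mem
    (Filter.Eventually.of_forall fun y =>
      ((Complex.continuous_ofReal.comp (by continuity)).aestronglyMeasurable.mul hψ.1))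
    (by
      refine key_int hψ 1 _ ((Complex.continuous_ofReal.comp (by continuity)).aestronglyMeasurable) ?_
      intro p hp
      simp only [Complex.norm_real, Real.norm_eq_abs, pow_one, Function.comp]
      rw [abs_mul, abs_neg]
      calc |Real.sin (p * x)| * |p| ≤ 1 * |p| :=
            mul_le_mul_of_nonneg_right (Real.abs_sin_le_one _) (abs_nonneg _)
        _ = p := by rw [one_mul, abs_of_pos hp])
    ((Complex.continuous_ofReal.comp (by continuity)).aestronglyMeasurable.mul hψ.1)
    (by
      filter_upwards [ae_restrict_mem measurableSet_Ioi] with p hp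
      intro y _
      rw [norm_mul, Complex.norm_real, Real.norm_eq_abs]
      refine mul_le_mul_of_nonneg_right ?_ (norm_nonneg _)
      rw [abs_mul, abs_neg, abs_mul]
      have h1 : |Real.cos (p * y)| * |p| ≤ 1 * |p| :=
        mul_le_mul_of_nonneg_right (Real.abs_cos_le_one _) (abs_nonneg _)
      calc |Real.cos (p * y)| * |p| * |p| ≤ 1 * |p| * |p| :=
            mul_le_mul_of_nonneg_right h1 (abs_nonneg _)
        _ = p ^ 2 := by rw [one_mul, abs_of_pos hp]; ring)
    (memL2Inf_moment hψ 2)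
    (Filter.Eventually.of_forall fun p => by
      intro y _
      have h1 : HasDerivAt (fun y : ℝ => p * y) p y := by
        simpa using (hasDerivAt_id y).const_mul p
      have h2 := (h1.sin.neg.mul_const p).ofReal_comp.mul_const (ψ p)
      exact h2)
  exact key.2

/-- The cosine transform intertwines the momentum-space Neumann Bessel operator with the
Bessel differential expression `L_α`, on minimal-domain vectors. -/
theorem cosineTransform_intertwines_besselN (α : ℝ) (ψ : ℝ → ℂ) (hψ : MemL2Inf ψ)
    (hmom : ∫ p in Set.Ioi (0:ℝ), ψ p = 0) :
    (∀ p > (0:ℝ), IntegrableOn (fun q : ℝ => ((max p q : ℝ) : ℂ) * ψ q) (Set.Ioi 0)) ∧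
    ∀ x > (0:ℝ),
      IntegrableOn (fun p : ℝ => (Real.cos (p * x) : ℂ) * momentumBesselN α ψ p)
        (Set.Ioi 0) ∧
      -(deriv (deriv (cosineTransform ψ)) x)
          + ((α : ℂ) - 1/4) * ((x : ℂ)^2)⁻¹ * cosineTransform ψ x
        = (Real.sqrt (2 / Real.pi) : ℂ) *
            ∫ p in Set.Ioi (0:ℝ), (Real.cos (p * x) : ℂ) * momentumBesselN α ψ p := by
  set μ : Measure ℝ := volume.restrict (Set.Ioi 0) with hμ
  -- ψ itself is integrable
  have hψint : IntegrableOn ψ (Set.Ioi 0) := by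
    have := key_int hψ 0 (fun _ => 1) aestronglyMeasurable_const (by intro p hp; simp)
    simpa using this
  -- integrability of max(q-p,0) ψ q for any p ≥ 0
  have hWint : ∀ p : ℝ, 0 ≤ p →
      IntegrableOn (fun q => ((max (q - p) 0 : ℝ) : ℂ) * ψ q) (Set.Ioi 0) := by
    intro p hp
    refine key_int hψ 1 _ (Continuous.aestronglyMeasurable (by continuity)) ?_
    intro q hq
    rw [Complex.norm_real, Real.norm_eq_abs, abs_of_nonneg (le_max_right _ _), pow_one]
    rcases le_total q p with h | h
    · simp only [max_eq_right (by linarith : q - p ≤ 0)]; exact le_of_lt hq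
    · rw [max_eq_left (by linarith : (0:ℝ) ≤ q - p)]; linarith [Set.mem_Ioi.mp hq]
  have hmax : ∀ p q : ℝ, ((max p q : ℝ) : ℂ) = (p : ℂ) + ((max (q - p) 0 : ℝ) : ℂ) := by
    intro p q
    rcases le_total p q with h | h
    · rw [max_eq_right h, max_eq_left (by linarith : (0:ℝ) ≤ q - p)]; push_cast; ring
    · rw [max_eq_left h, max_eq_right (by linarith : q - p ≤ 0)]; push_cast; ring
  have hKint : ∀ p > (0:ℝ), IntegrableOn (fun q : ℝ => ((max p q : ℝ) : ℂ) * ψ q)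
      (Set.Ioi 0) := by
    intro p hp
    have h1 : IntegrableOn (fun q => (p : ℂ) * ψ q + ((max (q - p) 0 : ℝ) : ℂ) * ψ q)
        (Set.Ioi 0) := (hψint.const_mul _).add (hWint p hp.le)
    refine h1.congr_fun (fun q _ => ?_) measurableSet_Ioi
    rw [hmax p q]; ring
  have hKval : ∀ p > (0:ℝ),
      (∫ q in Set.Ioi (0:ℝ), ((max p q : ℝ) : ℂ) * ψ q)
        = ∫ q in Set.Ioi (0:ℝ), ((max (q - p) 0 : ℝ) : ℂ) * ψ q := by
    intro p hp
    have h1 : (∫ q in Set.Ioi (0:ℝ), ((max p q : ℝ) : ℂ) * ψ q)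
        = ∫ q in Set.Ioi (0:ℝ), ((p : ℂ) * ψ q + ((max (q - p) 0 : ℝ) : ℂ) * ψ q) := by
      refine setIntegral_congr_fun measurableSet_Ioi (fun q _ => ?_)
      rw [hmax p q]; ring
    rw [h1, integral_add (hψint.const_mul _) (hWint p hp.le), integral_const_mul, hmom,
      mul_zero, zero_add]
  refine ⟨hKint, ?_⟩
  intro x hx
  have hx0 : (x : ℂ) ^ 2 ≠ 0 :=
    pow_ne_zero 2 (Complex.ofReal_ne_zero.mpr (ne_of_gt hx))
  set Φ : ℝ → ℝ → ℂ :=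
    fun p q => ((Real.cos (p * x) * max (q - p) 0 : ℝ) : ℂ) * ψ q with hΦ
  -- measurability on the product
  have hΦm : AEStronglyMeasurable (Function.uncurry Φ) (μ.prod μ) := by
    have hc : Continuous (fun z : ℝ × ℝ =>
        ((Real.cos (z.1 * x) * max (z.2 - z.1) 0 : ℝ) : ℂ)) :=
      Complex.continuous_ofReal.comp
        ((Real.continuous_cos.comp (continuous_fst.mul continuous_const)).mul
          ((continuous_snd.sub continuous_fst).max continuous_const))
    exact hc.aestronglyMeasurable.mul hψ.1.comp_snd
  -- slice integrability
  have hslice : ∀ p ∈ Set.Ioi (0:ℝ), Integrable (Φ p) μ := by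
    intro p hp
    refine key_int hψ 1 _ (Continuous.aestronglyMeasurable
      (Complex.continuous_ofReal.comp (continuous_const.mul
        ((continuous_id.sub continuous_const).max continuous_const)))) ?_
    intro q hq
    rw [Complex.norm_real, Real.norm_eq_abs, pow_one, abs_mul]
    calc |Real.cos (p * x)| * |max (q - p) 0| ≤ 1 * |max (q - p) 0| :=
          mul_le_mul_of_nonneg_right (Real.abs_cos_le_one _) (abs_nonneg _)
      _ = max (q - p) 0 := by rw [one_mul, abs_of_nonneg (le_max_right _ _)]
      _ ≤ q := by
          rcases le_total q p with h | h
          · rw [max_eq_right (by linarith : q - p ≤ 0)]; exact (Set.mem_Ioi.mp hq).le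
          · rw [max_eq_left (by linarith : (0:ℝ) ≤ q - p)]
            linarith [Set.mem_Ioi.mp hq, Set.mem_Ioi.mp hp]
  have hsliceae : ∀ᵐ p ∂μ, Integrable (fun q => Function.uncurry Φ (p, q)) μ := by
    filter_upwards [ae_restrict_mem measurableSet_Ioi] with p hp
    exact hslice p hp
  -- integrability of the norm integrals
  set C1 : ℝ := ∫ q in Set.Ioi (0:ℝ), q ^ 1 * ‖ψ q‖ with hC1
  set C3 : ℝ := ∫ q in Set.Ioi (0:ℝ), q ^ 3 * ‖ψ q‖ with hC3
  have hnorm : Integrable (fun p => ∫ q, ‖Function.uncurry Φ (p, q)‖ ∂μ) μ := by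
    have hbint : Integrable (fun p : ℝ => (C1 + C3) * (1 + p ^ 2)⁻¹) μ :=
      (integrable_inv_one_add_sq.integrableOn).const_mul (C1 + C3)
    refine Integrable.mono' hbint (hΦm.norm.integral_prod_right') ?_
    filter_upwards [ae_restrict_mem measurableSet_Ioi] with p hp
    have hp0 : (0:ℝ) < p := hp
    have h1p : (0:ℝ) < 1 + p ^ 2 := by positivity
    rw [Real.norm_eq_abs, abs_of_nonneg (integral_nonneg fun q => norm_nonneg _)]
    have hpt : ∀ q ∈ Set.Ioi (0:ℝ), ‖Φ p q‖ ≤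
        (1 + p ^ 2)⁻¹ * (q ^ 1 * ‖ψ q‖ + q ^ 3 * ‖ψ q‖) := by
      intro q hq
      have hq0 : (0:ℝ) < q := hq
      rw [hΦ]
      simp only [norm_mul, Complex.norm_real, Real.norm_eq_abs]
      have hb : |Real.cos (p * x) * max (q - p) 0| ≤ (1 + p ^ 2)⁻¹ * (q ^ 1 + q ^ 3) := by
        rw [abs_mul]
        have h2 : |max (q - p) 0| = max (q - p) 0 := abs_of_nonneg (le_max_right _ _)
        have h3 : max (q - p) 0 ≤ (1 + p ^ 2)⁻¹ * (q ^ 1 + q ^ 3) := by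
          rw [le_inv_mul_iff₀ h1p]
          rcases le_total q p with h | h
          · rw [max_eq_right (by linarith : q - p ≤ 0), mul_zero]; positivity
          · rw [max_eq_left (by linarith : (0:ℝ) ≤ q - p)]
            have h4 : p ^ 2 * q ≤ q ^ 2 * q := by nlinarith [mul_self_le_mul_self hp0.le h]
            nlinarith [h4, pow_nonneg hp0.le 3, hp0.le]
        calc |Real.cos (p * x)| * |max (q - p) 0| ≤ 1 * |max (q - p) 0| :=
              mul_le_mul_of_nonneg_right (Real.abs_cos_le_one _) (abs_nonneg _)
          _ ≤ (1 + p ^ 2)⁻¹ * (q ^ 1 + q ^ 3) := by rw [one_mul, h2]; exact h3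
      rw [← abs_mul]
      calc |Real.cos (p * x) * max (q - p) 0| * ‖ψ q‖
          ≤ ((1 + p ^ 2)⁻¹ * (q ^ 1 + q ^ 3)) * ‖ψ q‖ :=
            mul_le_mul_of_nonneg_right hb (norm_nonneg _)
        _ = (1 + p ^ 2)⁻¹ * (q ^ 1 * ‖ψ q‖ + q ^ 3 * ‖ψ q‖) := by ring
    have hmono : (∫ q, ‖Function.uncurry Φ (p, q)‖ ∂μ) ≤
        ∫ q in Set.Ioi (0:ℝ), (1 + p ^ 2)⁻¹ * (q ^ 1 * ‖ψ q‖ + q ^ 3 * ‖ψ q‖) := by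
      refine integral_mono_ae ((hslice p hp).norm)
        (((memL2Inf_moment hψ 1).add (memL2Inf_moment hψ 3)).const_mul _) ?_
      filter_upwards [ae_restrict_mem measurableSet_Ioi] with q hq
      exact hpt q hq
    calc (∫ q, ‖Function.uncurry Φ (p, q)‖ ∂μ)
        ≤ ∫ q in Set.Ioi (0:ℝ), (1 + p ^ 2)⁻¹ * (q ^ 1 * ‖ψ q‖ + q ^ 3 * ‖ψ q‖) := hmono
      _ = (1 + p ^ 2)⁻¹ * (C1 + C3) := by
          rw [integral_const_mul, integral_add (memL2Inf_moment hψ 1) (memL2Inf_moment hψ 3)]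
      _ = (C1 + C3) * (1 + p ^ 2)⁻¹ := by ring
  have hΦprod : Integrable (Function.uncurry Φ) (μ.prod μ) :=
    (integrable_prod_iff hΦm).2 ⟨hsliceae, hnorm⟩
  -- the inner dp-integral after swapping
  have hinner : ∀ q ∈ Set.Ioi (0:ℝ),
      (∫ p in Set.Ioi (0:ℝ), Φ p q)
        = (((1 - Real.cos (q * x)) / x ^ 2 : ℝ) : ℂ) * ψ q := by
    intro q hq
    have hq0 : (0:ℝ) < q := hq
    have hreal : (∫ p in Set.Ioi (0:ℝ), Real.cos (p * x) * max (q - p) 0)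
        = (1 - Real.cos (q * x)) / x ^ 2 := by
      have hsplit : Set.Ioi (0:ℝ) = Set.Ioc 0 q ∪ Set.Ioi q :=
        (Set.Ioc_union_Ioi_eq_Ioi hq0.le).symm
      have hint1 : IntegrableOn (fun p => Real.cos (p * x) * max (q - p) 0)
          (Set.Ioc 0 q) := Continuous.integrableOn_Ioc
            ((Real.continuous_cos.comp (continuous_mul_right x)).mul
              ((continuous_const.sub continuous_id).max continuous_const))
      have heq2 : Set.EqOn (fun p => Real.cos (p * x) * max (q - p) 0) 0 (Set.Ioi q) := by
        intro p hp
        have : q - p ≤ 0 := by linarith [Set.mem_Ioi.mp hp]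
        simp [max_eq_right this]
      have hint2 : IntegrableOn (fun p => Real.cos (p * x) * max (q - p) 0)
          (Set.Ioi q) := (integrableOn_congr_fun heq2 measurableSet_Ioi).2 integrableOn_zero
      rw [hsplit, setIntegral_union Set.Ioc_disjoint_Ioi_same measurableSet_Ioi hint1 hint2]
      have h2z : (∫ p in Set.Ioi q, Real.cos (p * x) * max (q - p) 0) = 0 := by
        rw [setIntegral_congr_fun measurableSet_Ioi heq2]; simp
      rw [h2z, add_zero]
      have h1v : (∫ p in Set.Ioc 0 q, Real.cos (p * x) * max (q - p) 0)
          = ∫ p in Set.Ioc 0 q, Real.cos (p * x) * (q - p) := by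
        refine setIntegral_congr_fun measurableSet_Ioc (fun p hp => ?_)
        rw [max_eq_left (by linarith [hp.2] : (0:ℝ) ≤ q - p)]
      rw [h1v, ← intervalIntegral.integral_of_le hq0.le, ftc_cos hx q]
    calc (∫ p in Set.Ioi (0:ℝ), Φ p q)
        = (↑(∫ p in Set.Ioi (0:ℝ), Real.cos (p * x) * max (q - p) 0) : ℂ) * ψ q := by
          rw [show (∫ p in Set.Ioi (0:ℝ), Φ p q)
              = ∫ p in Set.Ioi (0:ℝ),
                  ((Real.cos (p * x) * max (q - p) 0 : ℝ) : ℂ) * ψ q from rfl,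
            integral_mul_const]
          congr 1
          exact integral_ofReal
      _ = (((1 - Real.cos (q * x)) / x ^ 2 : ℝ) : ℂ) * ψ q := by rw [hreal]
  -- the dq-integral of Φ p · equals cos(px) * K p on Ioi 0
  have hcosK : ∀ p ∈ Set.Ioi (0:ℝ),
      (∫ q, Φ p q ∂μ) = (Real.cos (p * x) : ℂ) *
        ∫ q in Set.Ioi (0:ℝ), ((max p q : ℝ) : ℂ) * ψ q := by
    intro p hp
    rw [hKval p hp, ← integral_const_mul]
    refine setIntegral_congr_fun measurableSet_Ioi (fun q _ => ?_)
    rw [hΦ]; push_cast; ring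
  have hcosWint : Integrable (fun p => ∫ q, Φ p q ∂μ) μ := hΦprod.integral_prod_left
  have hKcosint : IntegrableOn
      (fun p => (Real.cos (p * x) : ℂ) * ∫ q in Set.Ioi (0:ℝ), ((max p q : ℝ) : ℂ) * ψ q)
      (Set.Ioi 0) := IntegrableOn.congr_fun hcosWint hcosK measurableSet_Ioi
  -- integrals chained
  have hcosint : IntegrableOn (fun p => (Real.cos (p * x) : ℂ) * ψ p) (Set.Ioi 0) := by
    refine key_int hψ 0 _ ((Complex.continuous_ofReal.comp
      (Real.continuous_cos.comp (continuous_mul_right x))).aestronglyMeasurable) ?_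
    intro p hp
    simp only [pow_zero, Complex.norm_real, Real.norm_eq_abs, Function.comp]
    exact Real.abs_cos_le_one _
  have hp2int : IntegrableOn (fun p => (Real.cos (p * x) : ℂ) * ((p:ℂ)^2 * ψ p))
      (Set.Ioi 0) := by
    have h1 := key_int hψ 2 (fun p => (Real.cos (p * x) : ℂ) * (p:ℂ)^2)
      (Continuous.aestronglyMeasurable
        ((Complex.continuous_ofReal.comp
          (Real.continuous_cos.comp (continuous_mul_right x))).mul
          ((Complex.continuous_ofReal.comp continuous_id).pow 2))) (by
        intro p hp
        rw [norm_mul, Complex.norm_real, Real.norm_eq_abs]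
        have : ‖(p:ℂ)^2‖ = p^2 := by
          rw [norm_pow, Complex.norm_real, Real.norm_eq_abs, sq_abs]
        rw [this]
        calc |Real.cos (p * x)| * p ^ 2 ≤ 1 * p ^ 2 :=
              mul_le_mul_of_nonneg_right (Real.abs_cos_le_one _) (by positivity)
          _ = p ^ 2 := one_mul _)
    refine h1.congr_fun (fun p _ => ?_) measurableSet_Ioi
    ring
  have hKcosval : (∫ p in Set.Ioi (0:ℝ),
        (Real.cos (p * x) : ℂ) * ∫ q in Set.Ioi (0:ℝ), ((max p q : ℝ) : ℂ) * ψ q)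
      = -((x:ℂ)^2)⁻¹ * ∫ p in Set.Ioi (0:ℝ), (Real.cos (p * x) : ℂ) * ψ p := by
    rw [← setIntegral_congr_fun measurableSet_Ioi hcosK]
    have hswap : (∫ p, (∫ q, Φ p q ∂μ) ∂μ) = ∫ q, (∫ p, Φ p q ∂μ) ∂μ :=
      integral_integral_swap hΦprod
    rw [hμ] at hswap
    rw [hswap]
    have h2 : (∫ q in Set.Ioi (0:ℝ), ∫ p in Set.Ioi (0:ℝ), Φ p q)
        = ∫ q in Set.Ioi (0:ℝ),
            (((x:ℂ)^2)⁻¹ * ψ q - ((x:ℂ)^2)⁻¹ * ((Real.cos (q * x) : ℂ) * ψ q)) := by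
      refine setIntegral_congr_fun measurableSet_Ioi (fun q hq => ?_)
      rw [hinner q hq]
      push_cast
      field_simp
    rw [h2, integral_sub (hψint.const_mul _) (hcosint.const_mul _),
      integral_const_mul, integral_const_mul, hmom, mul_zero, zero_sub]
    ring
  -- RHS integrand decomposition
  have hRHSeq : Set.EqOn (fun p : ℝ => (Real.cos (p * x) : ℂ) * momentumBesselN α ψ p)
      (fun p : ℝ => (Real.cos (p * x) : ℂ) * ((p:ℂ)^2 * ψ p)
        - ((α : ℂ) - 1/4) * ((Real.cos (p * x) : ℂ) *
            ∫ q in Set.Ioi (0:ℝ), ((max p q : ℝ) : ℂ) * ψ q)) (Set.Ioi 0) := by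
    intro p _
    simp only [momentumBesselN]
    ring
  have hRHSint : IntegrableOn
      (fun p : ℝ => (Real.cos (p * x) : ℂ) * momentumBesselN α ψ p) (Set.Ioi 0) := by
    exact IntegrableOn.congr_fun (hp2int.sub (hKcosint.const_mul _))
      (fun p hp => (hRHSeq hp).symm) measurableSet_Ioi
  refine ⟨hRHSint, ?_⟩
  -- value of RHS integral
  have hRHSval : (∫ p in Set.Ioi (0:ℝ), (Real.cos (p * x) : ℂ) * momentumBesselN α ψ p)
      = (∫ p in Set.Ioi (0:ℝ), (Real.cos (p * x) : ℂ) * ((p:ℂ)^2 * ψ p))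
        - ((α : ℂ) - 1/4) * (-((x:ℂ)^2)⁻¹ *
            ∫ p in Set.Ioi (0:ℝ), (Real.cos (p * x) : ℂ) * ψ p) := by
    rw [setIntegral_congr_fun measurableSet_Ioi hRHSeq,
      integral_sub hp2int (hKcosint.const_mul _), integral_const_mul, hKcosval]
  -- derivatives of the cosine transform
  have hD1 : deriv (cosineTransform ψ) = fun y =>
      (Real.sqrt (2 / Real.pi) : ℂ) *
        ∫ p in Set.Ioi (0:ℝ), ((-Real.sin (p * y) * p : ℝ) : ℂ) * ψ p := by
    funext y
    exact (((cos_deriv1 hψ y).const_mul (Real.sqrt (2 / Real.pi) : ℂ))).deriv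
  have hD2 : deriv (deriv (cosineTransform ψ)) x =
      (Real.sqrt (2 / Real.pi) : ℂ) *
        ∫ p in Set.Ioi (0:ℝ), ((-(Real.cos (p * x) * p) * p : ℝ) : ℂ) * ψ p := by
    rw [hD1]
    exact (((cos_deriv2 hψ x).const_mul (Real.sqrt (2 / Real.pi) : ℂ))).deriv
  have hneg : (∫ p in Set.Ioi (0:ℝ), ((-(Real.cos (p * x) * p) * p : ℝ) : ℂ) * ψ p)
      = -∫ p in Set.Ioi (0:ℝ), (Real.cos (p * x) : ℂ) * ((p:ℂ)^2 * ψ p) := by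
    rw [← integral_neg]
    refine setIntegral_congr_fun measurableSet_Ioi (fun p _ => ?_)
    push_cast; ring
  rw [hD2, hneg, hRHSval]
  show -((Real.sqrt (2 / Real.pi) : ℂ) * _) + ((α : ℂ) - 1/4) * ((x:ℂ)^2)⁻¹ *
      ((Real.sqrt (2 / Real.pi) : ℂ) * ∫ p in Set.Ioi (0:ℝ), (Real.cos (p * x) : ℂ) * ψ p) = _
  ring
end
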